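/- For n ≥ 5, the eccentricity matrix E(W_n) of the wheel graph is not a Euclidean distance matrix; in particular, there exists a vector x ∈ R^n with x'e = 0 and x'E(W_n)x > 0. -/

import Mathlib

open Matrix

noncomputable section

/-- Tridiagonal matrix of order `m` with `a` on the diagonal, `b` on the superdiagonal
and `c` on the subdiagonal. -/
def tridiag {R : Type*} [Zero R] (m : ℕ) (a b c : R) : Matrix (Fin m) (Fin m) R :=
  Matrix.of fun i j =>
    if (i : ℕ) = (j : ℕ) then a
    else if (j : ℕ) = (i : ℕ) + 1 then b
    else if (i : ℕ) = (j : ℕ) + 1 then c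
    else 0

/-- The bordered matrix `[[0, e'],[e, A]]` where `e` is the all-ones vector. -/
def border {R : Type*} [Zero R] [One R] {m : ℕ} (A : Matrix (Fin m) (Fin m) R) :
    Matrix (Fin (m + 1)) (Fin (m + 1)) R :=
  Matrix.of fun i j =>
    if hi : i = 0 then (if j = 0 then 0 else 1)
    else if hj : j = 0 then 1
    else A (i.pred hi) (j.pred hj)

/-- The circulant matrix whose first row is `c`, each subsequent row the cyclic
right shift of the previous one. -/
def circ {R : Type*} {m : ℕ} (c : Fin m → R) : Matrix (Fin m) (Fin m) R :=
  Matrix.of fun i j => c (j - i)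

/-- The eccentricity matrix of the wheel graph `W_n` (hub is vertex `0`, cycle vertices
`1, …, n-1`): `E(W_n) = [[0, e'],[e, circ(0,0,2,…,2,0)]]`. -/
def EW (n : ℕ) : Matrix (Fin n) (Fin n) ℝ :=
  Matrix.of fun i j =>
    if i = j then 0
    else if (i : ℕ) = 0 ∨ (j : ℕ) = 0 then 1
    else if ((j : ℕ) : ZMod (n - 1)) - ((i : ℕ) : ZMod (n - 1)) = 1
            ∨ ((i : ℕ) : ZMod (n - 1)) - ((j : ℕ) : ZMod (n - 1)) = 1 then 0
    else 2

/-- Key quadratic-form inequality for squared Euclidean distances. -/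
lemma edm_quad {n r : ℕ} (p : Fin n → EuclideanSpace ℝ (Fin r)) (x : Fin n → ℝ)
    (hx : ∑ i, x i = 0) :
    ∑ i, ∑ j, x i * dist (p i) (p j) ^ 2 * x j ≤ 0 := by
  have e2 : ∑ i : Fin n, ∑ j, x i * ‖p j‖^2 * x j = 0 := by
    have h' : ∀ i j : Fin n, x i * ‖p j‖^2 * x j = ‖p j‖^2 * x j * x i :=
      fun i j => by ring
    simp_rw [h', ← Finset.sum_mul]
    rw [← Finset.mul_sum, hx, mul_zero]
  have e3 : ∑ i, ∑ j, x i * (inner ℝ (p i) (p j) : ℝ) * x j = ‖∑ i, x i • p i‖^2 := by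
    rw [← real_inner_self_eq_norm_sq]
    simp_rw [inner_sum, sum_inner, real_inner_smul_left, real_inner_smul_right]
    rw [Finset.sum_comm]
    refine Finset.sum_congr rfl fun i _ => Finset.sum_congr rfl fun j _ => by ring
  have hd : ∀ i j : Fin n, x i * dist (p i) (p j) ^ 2 * x j
      = x i * ‖p i‖^2 * x j - 2 * (x i * (inner ℝ (p i) (p j) : ℝ) * x j)
        + x i * ‖p j‖^2 * x j := by
    intro i j
    rw [dist_eq_norm, @norm_sub_sq_real]
    ring
  simp_rw [hd, Finset.sum_add_distrib, Finset.sum_sub_distrib, ← Finset.mul_sum,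
    ← Finset.sum_mul]
  rw [hx, mul_zero, e2, e3]
  nlinarith [sq_nonneg ‖∑ i, x i • p i‖]

lemma zmod_helper {m a b : ℕ} (hab : a < b) (hm : b - a < m)
    (hc : ((a:ℕ) : ZMod m) = ((b:ℕ) : ZMod m)) : False := by
  rw [ZMod.natCast_eq_natCast_iff] at hc
  have hd := (Nat.modEq_iff_dvd' hab.le).mp hc
  have := Nat.le_of_dvd (by omega) hd
  omega

lemma EW13 (n : ℕ) (h : 5 ≤ n) : EW n ⟨1, by omega⟩ ⟨3, by omega⟩ = 2 := by
  have hm : 4 ≤ n - 1 := by omega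
  simp only [EW, Matrix.of_apply]
  rw [if_neg (by simp [Fin.ext_iff]), if_neg (by simp), if_neg]
  rintro (hc | hc)
  · refine zmod_helper (m := n-1) (a := 2) (b := 3) (by norm_num) (by omega) ?_
    push_cast at hc ⊢
    linear_combination -hc
  · refine zmod_helper (m := n-1) (a := 1) (b := 4) (by norm_num) (by omega) ?_
    push_cast at hc ⊢
    linear_combination hc

lemma EW31 (n : ℕ) (h : 5 ≤ n) : EW n ⟨3, by omega⟩ ⟨1, by omega⟩ = 2 := by
  have hm : 4 ≤ n - 1 := by omega
  simp only [EW, Matrix.of_apply]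
  rw [if_neg (by simp [Fin.ext_iff]), if_neg (by simp), if_neg]
  rintro (hc | hc)
  · refine zmod_helper (m := n-1) (a := 1) (b := 4) (by norm_num) (by omega) ?_
    push_cast at hc ⊢
    linear_combination hc
  · refine zmod_helper (m := n-1) (a := 2) (b := 3) (by norm_num) (by omega) ?_
    push_cast at hc ⊢
    linear_combination -hc

lemma EW_succ (n : ℕ) (h : 5 ≤ n) (a : ℕ) (ha : 1 ≤ a) (ha' : a + 1 < n) :
    EW n ⟨a, by omega⟩ ⟨a + 1, by omega⟩ = 0 := by
  simp only [EW, Matrix.of_apply]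
  rw [if_neg (by simp [Fin.ext_iff]), if_neg (by simp; omega), if_pos]
  left
  push_cast
  ring

lemma EW_succ' (n : ℕ) (h : 5 ≤ n) (a : ℕ) (ha : 1 ≤ a) (ha' : a + 1 < n) :
    EW n ⟨a + 1, by omega⟩ ⟨a, by omega⟩ = 0 := by
  simp only [EW, Matrix.of_apply]
  rw [if_neg (by simp [Fin.ext_iff]), if_neg (by simp; omega), if_pos]
  right
  push_cast
  ring

lemma EW_diag (n : ℕ) (i : Fin n) : EW n i i = 0 := by
  simp [EW]

lemma sum_three {n : ℕ} (h : 5 ≤ n) (g : Fin n → ℝ)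
    (hg : ∀ i : Fin n, (i:ℕ) ≠ 1 → (i:ℕ) ≠ 2 → (i:ℕ) ≠ 3 → g i = 0) :
    ∑ i, g i = g ⟨1, by omega⟩ + g ⟨2, by omega⟩ + g ⟨3, by omega⟩ := by
  classical
  rw [← Finset.sum_subset
    (Finset.subset_univ ({⟨1, by omega⟩, ⟨2, by omega⟩, ⟨3, by omega⟩} : Finset (Fin n)))
    (fun i _ hi => by
      apply hg <;> · intro hv; apply hi; simp [Fin.ext_iff, hv])]
  rw [Finset.sum_insert (by simp [Fin.ext_iff]), Finset.sum_insert (by simp [Fin.ext_iff]),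
    Finset.sum_singleton]
  ring

theorem stmt8 (n : ℕ) (h : 5 ≤ n) :
    (¬ ∃ (r : ℕ) (p : Fin n → EuclideanSpace ℝ (Fin r)),
        ∀ i j, EW n i j = dist (p i) (p j) ^ 2) ∧
      ∃ x : Fin n → ℝ, x ⬝ᵥ (fun _ => (1 : ℝ)) = 0 ∧ 0 < x ⬝ᵥ (EW n).mulVec x := by
  classical
  set x : Fin n → ℝ := fun i =>
    if (i:ℕ) = 1 then 1 else if (i:ℕ) = 2 then -2 else if (i:ℕ) = 3 then 1 else 0 with hxdef
  have hx0 : ∀ i : Fin n, (i:ℕ) ≠ 1 → (i:ℕ) ≠ 2 → (i:ℕ) ≠ 3 → x i = 0 := by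
    intro i h1 h2 h3
    simp [hxdef, h1, h2, h3]
  have hx1 : x ⟨1, by omega⟩ = 1 := by simp [hxdef]
  have hx2 : x ⟨2, by omega⟩ = -2 := by simp [hxdef]
  have hx3 : x ⟨3, by omega⟩ = 1 := by simp [hxdef]
  have hsum : ∑ i, x i = 0 := by
    rw [sum_three h x hx0, hx1, hx2, hx3]; ring
  have hdot1 : x ⬝ᵥ (fun _ => (1 : ℝ)) = 0 := by
    simpa [dotProduct] using hsum
  have hquad : x ⬝ᵥ (EW n).mulVec x = 4 := by
    have inner_eval : ∀ i : Fin n, (EW n).mulVec x i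
        = EW n i ⟨1, by omega⟩ * 1 + EW n i ⟨2, by omega⟩ * (-2)
          + EW n i ⟨3, by omega⟩ * 1 := by
      intro i
      show ∑ j, EW n i j * x j = _
      rw [sum_three h (fun j => EW n i j * x j)
        (fun j h1 h2 h3 => by show EW n i j * x j = 0; rw [hx0 j h1 h2 h3, mul_zero]), hx1, hx2, hx3]
    rw [show x ⬝ᵥ (EW n).mulVec x = ∑ i, x i * (EW n).mulVec x i from rfl]
    rw [sum_three h _ (fun i h1 h2 h3 => by show x i * (EW n).mulVec x i = 0; rw [hx0 i h1 h2 h3, zero_mul]),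
      hx1, hx2, hx3, inner_eval, inner_eval, inner_eval]
    rw [EW_diag, EW_diag, EW_diag, EW13 n h, EW31 n h,
      EW_succ n h 1 (by norm_num) (by omega), EW_succ n h 2 (by norm_num) (by omega),
      EW_succ' n h 1 (by norm_num) (by omega), EW_succ' n h 2 (by norm_num) (by omega)]
    ring
  refine ⟨?_, x, hdot1, by rw [hquad]; norm_num⟩
  rintro ⟨r, p, hp⟩
  have hle := edm_quad p x hsum
  have : x ⬝ᵥ (EW n).mulVec x = ∑ i, ∑ j, x i * dist (p i) (p j) ^ 2 * x j := by
    simp_rw [dotProduct, mulVec, dotProduct, Finset.mul_sum, ← hp]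
    exact Finset.sum_congr rfl fun i _ => Finset.sum_congr rfl fun j _ => by ring
  rw [hquad] at this
  linarith [this ▸ hle]
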